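/- Let A be a unital C*-algebra, H and K complex Hilbert spaces, ρ : A → B(H) and π : A → B(K) unital star-algebra homomorphisms into the bounded operators, and let x ∈ H and y ∈ K satisfy ⟨x, ρ(a)x⟩ = ⟨y, π(a)y⟩ for all a ∈ A. Then there is a bounded operator U : K → H such that U ∘ U* is the orthogonal projection onto the closure of {ρ(a)x : a ∈ A}, U* ∘ U is the orthogonal projection onto the closure of {π(a)y : a ∈ A}, and U ∘ π(a) = ρ(a) ∘ U for all a ∈ A. -/

import Mathlib

open scoped InnerProductSpace

/-- `P` is the orthogonal projection onto the set `S` (necessarily a closed subspace):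
`P` is a self-adjoint idempotent bounded operator with range `S`. -/
def IsOrthogonalProjectionOnto
    {H : Type*} [NormedAddCommGroup H] [InnerProductSpace ℂ H] [CompleteSpace H]
    (P : H →L[ℂ] H) (S : Set H) : Prop :=
  ContinuousLinearMap.adjoint P = P ∧ P ∘L P = P ∧ Set.range P = S

lemma sub_orthogonalProjectionOnto_mem_orthogonal'
    {E : Type*} [NormedAddCommGroup E] [InnerProductSpace ℂ E]
    {K : Submodule ℂ E} [K.HasOrthogonalProjection] (v : E) :
    v - ↑(K.orthogonalProjectionOnto v) ∈ Kᗮ :=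
  K.sub_starProjection_mem_orthogonal v

lemma gns_aux {A : Type*} [AddCommGroup A] [Module ℂ A]
    {H K : Type*} [NormedAddCommGroup H] [InnerProductSpace ℂ H] [CompleteSpace H]
    [NormedAddCommGroup K] [InnerProductSpace ℂ K] [CompleteSpace K]
    (f : A →ₗ[ℂ] H) (g : A →ₗ[ℂ] K)
    (key : ∀ a b : A, ⟪f a, f b⟫_ℂ = ⟪g a, g b⟫_ℂ) :
    ∃ U : K →L[ℂ] H, (∀ a, U (g a) = f a) ∧
      ∀ k ∈ ((LinearMap.range g).topologicalClosure)ᗮ, U k = 0 := by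
  set N := (LinearMap.range g).topologicalClosure with hNdef
  haveI : CompleteSpace N := (Submodule.isClosed_topologicalClosure _).completeSpace_coe
  have hnorm : ∀ a : A, ‖f a‖ = ‖g a‖ := fun a => by
    rw [@norm_eq_sqrt_re_inner ℂ, @norm_eq_sqrt_re_inner ℂ _ _ _ _ (g a), key]
  have hker : LinearMap.ker g ≤ LinearMap.ker f := by
    intro a ha
    have h0 : g a = 0 := ha
    have h1 : ‖f a‖ = 0 := by rw [hnorm a, h0, norm_zero]
    simpa [LinearMap.mem_ker] using norm_eq_zero.mp h1
  let Tl : LinearMap.range g →ₗ[ℂ] H :=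
    ((LinearMap.ker g).liftQ f hker).comp g.quotKerEquivRange.symm.toLinearMap
  have hTl : ∀ (a : A) (h : g a ∈ LinearMap.range g), Tl ⟨g a, h⟩ = f a := by
    intro a h
    simp only [Tl, LinearMap.comp_apply, LinearEquiv.coe_coe,
      LinearMap.quotKerEquivRange_symm_apply_image, Submodule.mkQ_apply, Submodule.liftQ_apply]
  have hTnorm : ∀ v : LinearMap.range g, ‖Tl v‖ = ‖v‖ := by
    rintro ⟨-, a, rfl⟩
    refine (congrArg norm (hTl a _)).trans ?_
    exact hnorm a
  let T : LinearMap.range g →L[ℂ] H := Tl.mkContinuous 1 (fun v => by rw [hTnorm, one_mul])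
  have hT : ∀ (a : A) (h : g a ∈ LinearMap.range g), T ⟨g a, h⟩ = f a := hTl
  let ιl : (LinearMap.range g : Submodule ℂ K) →ₗ[ℂ] N :=
    Submodule.inclusion (Submodule.le_topologicalClosure _)
  have hιlnorm : ∀ v, ‖ιl v‖ = ‖v‖ := fun v => rfl
  let ι : (LinearMap.range g : Submodule ℂ K) →L[ℂ] N :=
    ιl.mkContinuous 1 (fun v => by rw [hιlnorm, one_mul])
  have hιnorm : ∀ v, ‖ι v‖ = ‖v‖ := fun v => rfl
  have hui : IsUniformInducing ι :=
    (AddMonoidHomClass.isometry_of_norm ι hιnorm).isUniformInducing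
  have hdense : DenseRange ι := by
    intro z
    have hz : (z : K) ∈ closure ((LinearMap.range g : Submodule ℂ K) : Set K) := by
      rw [← Submodule.topologicalClosure_coe]; exact z.2
    rw [closure_subtype]
    refine closure_mono ?_ hz
    intro w hw
    exact ⟨ι ⟨w, hw⟩, ⟨⟨w, hw⟩, rfl⟩, rfl⟩
  let Vc : N →L[ℂ] H := T.extend ι
  have hVc : ∀ v, Vc (ι v) = T v := fun v => ContinuousLinearMap.extend_eq T hdense hui v
  refine ⟨Vc.comp (Submodule.orthogonalProjectionOnto N), ?_, ?_⟩
  · intro a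
    have hmem : g a ∈ N := Submodule.le_topologicalClosure _ (LinearMap.mem_range_self g a)
    have h1 : Submodule.orthogonalProjectionOnto N (g a) = ⟨g a, hmem⟩ :=
      Submodule.orthogonalProjectionOnto_mem_subspace_eq_self (⟨g a, hmem⟩ : N)
    have h2 : (⟨g a, hmem⟩ : N) = ι ⟨g a, LinearMap.mem_range_self g a⟩ := rfl
    rw [ContinuousLinearMap.comp_apply, h1, h2, hVc, hT]
  · intro k hk
    have h1 : Submodule.orthogonalProjectionOnto N k = 0 :=
      Submodule.orthogonalProjectionOnto_apply_of_mem_orthogonal hk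
    rw [ContinuousLinearMap.comp_apply, h1, map_zero]

lemma isOrthogonalProjectionOnto_of_submodule
    {H : Type*} [NormedAddCommGroup H] [InnerProductSpace ℂ H] [CompleteSpace H]
    (N : Submodule ℂ H) [CompleteSpace N] :
    IsOrthogonalProjectionOnto (N.subtypeL ∘L Submodule.orthogonalProjectionOnto N) (N : Set H) := by
  refine ⟨?_, ?_, ?_⟩
  · have h := isSelfAdjoint_starProjection N
    rwa [IsSelfAdjoint, ContinuousLinearMap.star_eq_adjoint] at h
  · ext v
    simp only [ContinuousLinearMap.comp_apply, Submodule.subtypeL_apply,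
      Submodule.orthogonalProjectionOnto_mem_subspace_eq_self]
  · ext w
    constructor
    · rintro ⟨v, rfl⟩
      exact (Submodule.orthogonalProjectionOnto N v).2
    · intro hw
      exact ⟨w, Submodule.starProjection_eq_self_iff.mpr hw⟩

theorem gns_intertwiner
    {A : Type*} [CStarAlgebra A]
    {H K : Type*} [NormedAddCommGroup H] [InnerProductSpace ℂ H] [CompleteSpace H]
    [NormedAddCommGroup K] [InnerProductSpace ℂ K] [CompleteSpace K]
    (ρ : A →⋆ₐ[ℂ] (H →L[ℂ] H)) (π : A →⋆ₐ[ℂ] (K →L[ℂ] K))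
    (x : H) (y : K) (hxy : ∀ a : A, ⟪x, ρ a x⟫_ℂ = ⟪y, π a y⟫_ℂ) :
    ∃ U : K →L[ℂ] H,
      IsOrthogonalProjectionOnto (U ∘L ContinuousLinearMap.adjoint U)
        (closure (Set.range fun a : A => ρ a x)) ∧
      IsOrthogonalProjectionOnto (ContinuousLinearMap.adjoint U ∘L U)
        (closure (Set.range fun a : A => π a y)) ∧
      ∀ a : A, U ∘L π a = ρ a ∘L U := by
  classical
  -- the two linear "orbit" maps
  let f : A →ₗ[ℂ] H :=
    { toFun := fun a => ρ a x
      map_add' := fun a b => by simp [map_add]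
      map_smul' := fun c a => by simp [map_smul] }
  let g : A →ₗ[ℂ] K :=
    { toFun := fun a => π a y
      map_add' := fun a b => by simp [map_add]
      map_smul' := fun c a => by simp [map_smul] }
  have hadjρ : ∀ c : A, ContinuousLinearMap.adjoint (ρ c) = ρ (star c) := fun c => by
    rw [← ContinuousLinearMap.star_eq_adjoint, ← map_star]
  have hadjπ : ∀ c : A, ContinuousLinearMap.adjoint (π c) = π (star c) := fun c => by
    rw [← ContinuousLinearMap.star_eq_adjoint, ← map_star]
  have key : ∀ a b : A, ⟪f a, f b⟫_ℂ = ⟪g a, g b⟫_ℂ := by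
    intro a b
    have hf : ∀ c : A, f c = ρ c x := fun _ => rfl
    have hg : ∀ c : A, g c = π c y := fun _ => rfl
    calc ⟪f a, f b⟫_ℂ = ⟪ContinuousLinearMap.adjoint (ρ (star a)) x, ρ b x⟫_ℂ := by
          simp only [hf, hadjρ, star_star]
      _ = ⟪x, ρ (star a) (ρ b x)⟫_ℂ := ContinuousLinearMap.adjoint_inner_left _ _ _
      _ = ⟪x, ρ (star a * b) x⟫_ℂ := by rw [map_mul]; rfl
      _ = ⟪y, π (star a * b) y⟫_ℂ := hxy _
      _ = ⟪y, π (star a) (π b y)⟫_ℂ := by rw [map_mul]; rfl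
      _ = ⟪ContinuousLinearMap.adjoint (π (star a)) y, π b y⟫_ℂ :=
          (ContinuousLinearMap.adjoint_inner_left _ _ _).symm
      _ = ⟪g a, g b⟫_ℂ := by simp only [hg, hadjπ, star_star]
  obtain ⟨U, hU1, hU2⟩ := gns_aux f g key
  obtain ⟨V, hV1, hV2⟩ := gns_aux g f (fun a b => (key a b).symm)
  set Nρ := (LinearMap.range f).topologicalClosure with hNρdef
  set Nπ := (LinearMap.range g).topologicalClosure with hNπdef
  haveI : CompleteSpace Nρ := (Submodule.isClosed_topologicalClosure _).completeSpace_coe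
  haveI : CompleteSpace Nπ := (Submodule.isClosed_topologicalClosure _).completeSpace_coe
  have hclρ : (Nρ : Set H) = closure ((LinearMap.range f : Submodule ℂ H) : Set H) :=
    Submodule.topologicalClosure_coe _
  have hclπ : (Nπ : Set K) = closure ((LinearMap.range g : Submodule ℂ K) : Set K) :=
    Submodule.topologicalClosure_coe _
  -- U only sees the projection onto Nπ
  have hUP : ∀ k : K, U k = U ↑(Submodule.orthogonalProjectionOnto Nπ k) := by
    intro k
    have hd : k = (k - ↑(Submodule.orthogonalProjectionOnto Nπ k)) + ↑(Submodule.orthogonalProjectionOnto Nπ k) := by abel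
    conv_lhs => rw [hd]
    rw [map_add, hU2 _ (sub_orthogonalProjectionOnto_mem_orthogonal' k), zero_add]
  have hVP : ∀ h : H, V h = V ↑(Submodule.orthogonalProjectionOnto Nρ h) := by
    intro h
    have hd : h = (h - ↑(Submodule.orthogonalProjectionOnto Nρ h)) + ↑(Submodule.orthogonalProjectionOnto Nρ h) := by abel
    conv_lhs => rw [hd]
    rw [map_add, hV2 _ (sub_orthogonalProjectionOnto_mem_orthogonal' h), zero_add]
  -- ranges
  have hUmem : ∀ k : K, U k ∈ Nρ := by
    intro k
    rw [hUP k]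
    have hm : (↑(Submodule.orthogonalProjectionOnto Nπ k) : K) ∈
        closure ((LinearMap.range g : Submodule ℂ K) : Set K) := by
      rw [← hclπ]; exact (Submodule.orthogonalProjectionOnto Nπ k).2
    have h2 : U ↑(Submodule.orthogonalProjectionOnto Nπ k) ∈
        closure ((LinearMap.range f : Submodule ℂ H) : Set H) := by
      refine map_mem_closure U.continuous hm ?_
      rintro w ⟨a, rfl⟩
      rw [hU1]
      exact LinearMap.mem_range_self f a
    rw [← hclρ] at h2
    exact h2
  have hVmem : ∀ h : H, V h ∈ Nπ := by
    intro h
    rw [hVP h]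
    have hm : (↑(Submodule.orthogonalProjectionOnto Nρ h) : H) ∈
        closure ((LinearMap.range f : Submodule ℂ H) : Set H) := by
      rw [← hclρ]; exact (Submodule.orthogonalProjectionOnto Nρ h).2
    have h2 : V ↑(Submodule.orthogonalProjectionOnto Nρ h) ∈
        closure ((LinearMap.range g : Submodule ℂ K) : Set K) := by
      refine map_mem_closure V.continuous hm ?_
      rintro w ⟨a, rfl⟩
      rw [hV1]
      exact LinearMap.mem_range_self g a
    rw [← hclπ] at h2
    exact h2
  -- U ∘ V and V ∘ U are the projections
  have hUV : ∀ h : H, U (V h) = ↑(Submodule.orthogonalProjectionOnto Nρ h) := by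
    intro h
    have heq : Set.EqOn (fun w => U (V w)) id
        ((LinearMap.range f : Submodule ℂ H) : Set H) := by
      rintro w ⟨a, rfl⟩
      show U (V (f a)) = f a
      rw [hV1, hU1]
    have heqc := heq.closure (U.continuous.comp V.continuous) continuous_id
    have hm : (↑(Submodule.orthogonalProjectionOnto Nρ h) : H) ∈
        closure ((LinearMap.range f : Submodule ℂ H) : Set H) := by
      rw [← hclρ]; exact (Submodule.orthogonalProjectionOnto Nρ h).2
    rw [hVP h]
    exact heqc hm
  have hVU : ∀ k : K, V (U k) = ↑(Submodule.orthogonalProjectionOnto Nπ k) := by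
    intro k
    have heq : Set.EqOn (fun w => V (U w)) id
        ((LinearMap.range g : Submodule ℂ K) : Set K) := by
      rintro w ⟨a, rfl⟩
      show V (U (g a)) = g a
      rw [hU1, hV1]
    have heqc := heq.closure (V.continuous.comp U.continuous) continuous_id
    have hm : (↑(Submodule.orthogonalProjectionOnto Nπ k) : K) ∈
        closure ((LinearMap.range g : Submodule ℂ K) : Set K) := by
      rw [← hclπ]; exact (Submodule.orthogonalProjectionOnto Nπ k).2
    rw [hUP k]
    exact heqc hm
  -- V is the adjoint of U
  have hadj : ContinuousLinearMap.adjoint U = V := by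
    symm
    rw [ContinuousLinearMap.eq_adjoint_iff]
    intro h k
    have step1 : ∀ b : A, Set.EqOn (fun p : H => ⟪V p, g b⟫_ℂ)
        (fun p : H => ⟪p, U (g b)⟫_ℂ)
        (closure ((LinearMap.range f : Submodule ℂ H) : Set H)) := by
      intro b
      refine Set.EqOn.closure ?_ (Continuous.inner V.continuous continuous_const)
        (Continuous.inner continuous_id continuous_const)
      rintro p ⟨a, rfl⟩
      show ⟪V (f a), g b⟫_ℂ = ⟪f a, U (g b)⟫_ℂ
      rw [hV1, hU1]
      exact (key a b).symm
    have step2 : ∀ p ∈ closure ((LinearMap.range f : Submodule ℂ H) : Set H),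
        Set.EqOn (fun q : K => ⟪V p, q⟫_ℂ) (fun q : K => ⟪p, U q⟫_ℂ)
        (closure ((LinearMap.range g : Submodule ℂ K) : Set K)) := by
      intro p hp
      refine Set.EqOn.closure ?_ (Continuous.inner continuous_const continuous_id)
        (Continuous.inner continuous_const U.continuous)
      rintro q ⟨b, rfl⟩
      exact step1 b hp
    have hpρ : (↑(Submodule.orthogonalProjectionOnto Nρ h) : H) ∈
        closure ((LinearMap.range f : Submodule ℂ H) : Set H) := by
      rw [← hclρ]; exact (Submodule.orthogonalProjectionOnto Nρ h).2
    have hpπ : (↑(Submodule.orthogonalProjectionOnto Nπ k) : K) ∈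
        closure ((LinearMap.range g : Submodule ℂ K) : Set K) := by
      rw [← hclπ]; exact (Submodule.orthogonalProjectionOnto Nπ k).2
    have z1 : ⟪V h, k - ↑(Submodule.orthogonalProjectionOnto Nπ k)⟫_ℂ = 0 :=
      (Submodule.mem_orthogonal Nπ _).mp (sub_orthogonalProjectionOnto_mem_orthogonal' k)
        (V h) (hVmem h)
    have z2 : ⟪h - ↑(Submodule.orthogonalProjectionOnto Nρ h), U k⟫_ℂ = 0 := by
      rw [inner_eq_zero_symm]
      exact (Submodule.mem_orthogonal Nρ _).mp (sub_orthogonalProjectionOnto_mem_orthogonal' h)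
        (U k) (hUmem k)
    calc ⟪V h, k⟫_ℂ
        = ⟪V h, ↑(Submodule.orthogonalProjectionOnto Nπ k) + (k - ↑(Submodule.orthogonalProjectionOnto Nπ k))⟫_ℂ := by
          congr 1; abel
      _ = ⟪V h, (↑(Submodule.orthogonalProjectionOnto Nπ k) : K)⟫_ℂ := by
          rw [inner_add_right, z1, add_zero]
      _ = ⟪V ↑(Submodule.orthogonalProjectionOnto Nρ h), (↑(Submodule.orthogonalProjectionOnto Nπ k) : K)⟫_ℂ := by
          rw [← hVP h]
      _ = ⟪(↑(Submodule.orthogonalProjectionOnto Nρ h) : H), U ↑(Submodule.orthogonalProjectionOnto Nπ k)⟫_ℂ :=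
          step2 _ hpρ hpπ
      _ = ⟪(↑(Submodule.orthogonalProjectionOnto Nρ h) : H), U k⟫_ℂ := by rw [← hUP k]
      _ = ⟪↑(Submodule.orthogonalProjectionOnto Nρ h) + (h - ↑(Submodule.orthogonalProjectionOnto Nρ h)), U k⟫_ℂ := by
          rw [inner_add_left, z2, add_zero]
      _ = ⟪h, U k⟫_ℂ := by congr 1; abel
  -- the composite maps are the projections
  have hUUadj : U ∘L ContinuousLinearMap.adjoint U = Nρ.subtypeL ∘L Submodule.orthogonalProjectionOnto Nρ := by
    rw [hadj]
    ext h
    exact hUV h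
  have hadjUU : ContinuousLinearMap.adjoint U ∘L U = Nπ.subtypeL ∘L Submodule.orthogonalProjectionOnto Nπ := by
    rw [hadj]
    ext k
    exact hVU k
  have hsetρ : ((Nρ : Submodule ℂ H) : Set H) = closure (Set.range fun a : A => ρ a x) := by
    rw [hclρ, LinearMap.coe_range]
    rfl
  have hsetπ : ((Nπ : Submodule ℂ K) : Set K) = closure (Set.range fun a : A => π a y) := by
    rw [hclπ, LinearMap.coe_range]
    rfl
  refine ⟨U, ?_, ?_, ?_⟩
  · rw [hUUadj, ← hsetρ]
    exact isOrthogonalProjectionOnto_of_submodule Nρ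
  · rw [hadjUU, ← hsetπ]
    exact isOrthogonalProjectionOnto_of_submodule Nπ
  · intro a
    ext k
    rw [ContinuousLinearMap.comp_apply, ContinuousLinearMap.comp_apply]
    -- π a preserves Nπ and its orthogonal complement
    have hNπinv : ∀ (c : A), ∀ w ∈ Nπ, π c w ∈ Nπ := by
      intro c w hw
      have hw' : w ∈ closure ((LinearMap.range g : Submodule ℂ K) : Set K) := by
        rw [← hclπ]; exact hw
      have h2 : π c w ∈ closure ((LinearMap.range g : Submodule ℂ K) : Set K) := by
        refine map_mem_closure (π c).continuous hw' ?_
        rintro v ⟨b, rfl⟩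
        have hv : π c (g b) = g (c * b) := by
          show π c (π b y) = π (c * b) y
          rw [map_mul]; rfl
        rw [hv]
        exact LinearMap.mem_range_self g (c * b)
      rw [← hclπ] at h2
      exact h2
    have horth : π a (k - ↑(Submodule.orthogonalProjectionOnto Nπ k)) ∈ Nπᗮ := by
      rw [Submodule.mem_orthogonal]
      intro u hu
      have h1 : ⟪π (star a) u, k - ↑(Submodule.orthogonalProjectionOnto Nπ k)⟫_ℂ = 0 :=
        (Submodule.mem_orthogonal Nπ _).mp (sub_orthogonalProjectionOnto_mem_orthogonal' k)
          _ (hNπinv (star a) u hu)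
      calc ⟪u, π a (k - ↑(Submodule.orthogonalProjectionOnto Nπ k))⟫_ℂ
          = ⟪ContinuousLinearMap.adjoint (π a) u, k - ↑(Submodule.orthogonalProjectionOnto Nπ k)⟫_ℂ :=
            (ContinuousLinearMap.adjoint_inner_left _ _ _).symm
        _ = 0 := by rw [hadjπ]; exact h1
    have hk1 : U (π a k) = U (π a ↑(Submodule.orthogonalProjectionOnto Nπ k)) := by
      have hd : k = (k - ↑(Submodule.orthogonalProjectionOnto Nπ k)) + ↑(Submodule.orthogonalProjectionOnto Nπ k) := by abel
      conv_lhs => rw [hd]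
      rw [map_add (π a), map_add U, hU2 _ horth, zero_add]
    have hk2 : ρ a (U k) = ρ a (U ↑(Submodule.orthogonalProjectionOnto Nπ k)) := by rw [← hUP k]
    have heq : Set.EqOn (fun w : K => U (π a w)) (fun w : K => ρ a (U w))
        ((LinearMap.range g : Submodule ℂ K) : Set K) := by
      rintro w ⟨b, rfl⟩
      show U (π a (g b)) = ρ a (U (g b))
      have h1 : π a (g b) = g (a * b) := by
        show π a (π b y) = π (a * b) y
        rw [map_mul]; rfl
      rw [h1, hU1, hU1]
      show f (a * b) = ρ a (f b)
      show ρ (a * b) x = ρ a (ρ b x)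
      rw [map_mul]; rfl
    have heqc := heq.closure (U.continuous.comp (π a).continuous)
      ((ρ a).continuous.comp U.continuous)
    have hm : (↑(Submodule.orthogonalProjectionOnto Nπ k) : K) ∈
        closure ((LinearMap.range g : Submodule ℂ K) : Set K) := by
      rw [← hclπ]; exact (Submodule.orthogonalProjectionOnto Nπ k).2
    rw [hk1, hk2]
    exact heqc hm
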